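/- Example (Square-root utility, full separation for many types). Let T = 3 and φ(v) = v² on D = [0,∞) (inverse of u(c) = √c). Let 0 < δ̲ < δ̄, and for each N ≥ 2 let the type set be δ^(n) = δ̲ + ((n−1)/(N−1))·(δ̄ − δ̲), n = 1,…,N, with p_n = q_n = 1/N for all n. Then there exists N₀ such that for every N ≥ N₀ and every initial type δ₁ ∈ Δ, the unique maximizer of Problem IV has its date-2 utilities v₂(δ^(n)) strictly positive and strictly decreasing in n, and its date-3 utilities v₃(δ^(n)) strictly positive and strictly increasing in n. -/

import Mathlib

/-- Equally spaced discount factors `δ^(n) = δ̲ + ((n-1)/(N-1))(δ̄-δ̲)` (here the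
index `n : Fin N` runs from `0` to `N-1`). -/
noncomputable def deltaUnif (δlo δhi : ℝ) (N : ℕ) (n : Fin N) : ℝ :=
  δlo + ((n : ℝ) / ((N : ℝ) - 1)) * (δhi - δlo)

/-- Feasibility for Problem IV with `T = 3`, square-root utility (`φ v = v²`), and
uniform beliefs: nonnegativity, the firm break-even constraint, and the date-2
incentive constraints. -/
def Feas15 (N : ℕ) (δlo δhi R I : ℝ) (v1 : ℝ) (v2 v3 : Fin N → ℝ) : Prop :=
  0 ≤ v1 ∧ (∀ n, 0 ≤ v2 n) ∧ (∀ n, 0 ≤ v3 n) ∧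
  v1 ^ 2 + (∑ n, (1 / (N : ℝ)) * ((v2 n) ^ 2 / R + (v3 n) ^ 2 / R ^ 2)) ≤ I ∧
  ∀ i j : Fin N, v2 j + deltaUnif δlo δhi N i * v3 j ≤ v2 i + deltaUnif δlo δhi N i * v3 i

/-- The agent's expected payoff for initial type `δ^(n1)`. -/
noncomputable def obj15 (N : ℕ) (δlo δhi : ℝ) (n1 : Fin N) (v1 : ℝ) (v2 v3 : Fin N → ℝ) : ℝ :=
  v1 + deltaUnif δlo δhi N n1 *
    ∑ n, (1 / (N : ℝ)) * (v2 n + deltaUnif δlo δhi N n * v3 n)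



set_option linter.unusedSectionVars false
namespace Stmt15Aux

/-- Context: parameters of the problem.  `a = δlo`, `b = δhi`, `d1 = δ^(n1)`. -/
structure Ctx where
  R : ℝ
  Inc : ℝ
  a : ℝ
  b : ℝ
  d1 : ℝ
  N : ℕ

namespace Ctx

variable (c : Ctx)

/-- grid spacing -/
noncomputable def hh : ℝ := (c.b - c.a) / ((c.N : ℝ) - 1)
/-- grid point -/
noncomputable def dl (n : ℕ) : ℝ := c.a + (n : ℝ) * c.hh
noncomputable def AA (n : ℕ) : ℝ := 1 + c.R * (c.dl n - c.hh) * c.dl n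
noncomputable def SS (n : ℕ) : ℝ :=
  c.d1 * c.R * c.hh / (c.N : ℝ) * ∑ k ∈ Finset.range n, c.dl k
noncomputable def WW : ℝ := ∑ k ∈ Finset.range c.N, 1 / c.AA k
noncomputable def CC : ℝ := (∑ k ∈ Finset.range c.N, c.SS k / c.AA k) / c.WW
noncomputable def tt (n : ℕ) : ℝ := (c.CC - c.SS n) / c.AA n
noncomputable def LL (n : ℕ) : ℝ := ∑ k ∈ Finset.range n, c.tt k
noncomputable def x2 (n : ℕ) : ℝ := c.R * (c.d1 + (c.N : ℝ) * c.tt n)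
noncomputable def x3 (n : ℕ) : ℝ :=
  c.R ^ 2 * (c.d1 * c.dl n + (c.N : ℝ) * (c.dl n * c.tt n + c.hh * c.LL n))
noncomputable def Bq : ℝ :=
  1 + ∑ n ∈ Finset.range c.N, (1 / (c.N : ℝ)) * ((c.x2 n) ^ 2 / c.R + (c.x3 n) ^ 2 / c.R ^ 2)
noncomputable def sg : ℝ := Real.sqrt (c.Bq / c.Inc)

/-- Goodness of the context: all the hypotheses we need. -/
structure Good (c : Ctx) : Prop where
  hR : 1 ≤ c.R
  hI : 0 < c.Inc
  ha : 0 < c.a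
  hab : c.a < c.b
  hd1lo : c.a ≤ c.d1
  hd1hi : c.d1 ≤ c.b
  hN2 : 2 ≤ c.N
  hc1 : c.hh ≤ c.a
  hc2 : 2 * c.R * c.b * c.hh ≤ 1

variable {c : Ctx} (hc : Good c)
include hc

lemma hR0 : (0:ℝ) < c.R := lt_of_lt_of_le one_pos hc.hR
lemma hRne : c.R ≠ 0 := ne_of_gt (hR0 hc)
lemma hN0 : (0:ℝ) < (c.N : ℝ) := by
  have := hc.hN2; positivity
lemma hNne : (c.N : ℝ) ≠ 0 := ne_of_gt (hN0 hc)
lemma hN1 : (1:ℝ) ≤ (c.N : ℝ) - 1 := by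
  have : (2:ℝ) ≤ (c.N : ℝ) := by exact_mod_cast hc.hN2
  linarith
lemma hh_pos : 0 < c.hh := by
  have h1 := hN1 hc
  have h2 := hc.hab
  have : (0:ℝ) < (c.N : ℝ) - 1 := by linarith
  exact div_pos (by linarith) this
lemma hd1 : 0 < c.d1 := lt_of_lt_of_le hc.ha hc.hd1lo
lemma dl_pos (n : ℕ) : 0 < c.dl n := by
  have h1 := hh_pos hc
  have h2 := hc.ha
  have : (0:ℝ) ≤ (n : ℝ) * c.hh := by positivity
  unfold dl; linarith
omit hc in
lemma dl_succ (n : ℕ) : c.dl (n+1) = c.dl n + c.hh := by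
  unfold dl; push_cast; ring
lemma dl_mono {m n : ℕ} (h : m ≤ n) : c.dl m ≤ c.dl n := by
  have h1 := hh_pos hc
  have : (m:ℝ) ≤ (n:ℝ) := by exact_mod_cast h
  unfold dl; nlinarith
lemma dl_strict {m n : ℕ} (h : m < n) : c.dl m < c.dl n := by
  have h1 := hh_pos hc
  have : (m:ℝ) < (n:ℝ) := by exact_mod_cast h
  unfold dl; nlinarith
lemma dl_le_b {n : ℕ} (h : n < c.N) : c.dl n ≤ c.b := by
  have h1 := hh_pos hc
  have h2 : (n:ℝ) ≤ (c.N:ℝ) - 1 := by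
    have : (n:ℝ) + 1 ≤ (c.N:ℝ) := by exact_mod_cast h
    linarith
  have hne : (c.N:ℝ) - 1 ≠ 0 := by have := hN1 hc; linarith
  have h3 : ((c.N:ℝ) - 1) * c.hh = c.b - c.a := by
    unfold hh; field_simp
  have : (n:ℝ) * c.hh ≤ ((c.N:ℝ) - 1) * c.hh := by nlinarith
  unfold dl; linarith
lemma dl_sub_h_nonneg (n : ℕ) : 0 ≤ c.dl n - c.hh := by
  have h1 := hh_pos hc
  have h2 := hc.hc1
  have : (0:ℝ) ≤ (n : ℝ) * c.hh := by positivity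
  unfold dl; linarith
lemma AA_ge_one (n : ℕ) : 1 ≤ c.AA n := by
  have h1 := dl_sub_h_nonneg hc n
  have h2 := (dl_pos hc n).le
  have h3 := (hR0 hc).le
  have : 0 ≤ c.R * (c.dl n - c.hh) * c.dl n := by positivity
  unfold AA; linarith
lemma AA_pos (n : ℕ) : 0 < c.AA n := lt_of_lt_of_le one_pos (AA_ge_one hc n)
lemma AA_ne (n : ℕ) : c.AA n ≠ 0 := ne_of_gt (AA_pos hc n)
lemma AA_succ (n : ℕ) : c.AA (n+1) = c.AA n + 2 * c.R * c.hh * c.dl n := by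
  unfold AA; rw [dl_succ]; ring
omit hc in
lemma SS_succ (n : ℕ) : c.SS (n+1) = c.SS n + c.d1 * c.R * c.hh / (c.N : ℝ) * c.dl n := by
  unfold SS; rw [Finset.sum_range_succ]; ring
lemma SS_coeff_nonneg : 0 ≤ c.d1 * c.R * c.hh / (c.N : ℝ) := by
  have := (hd1 hc).le; have := (hR0 hc).le; have := (hh_pos hc).le
  have := (hN0 hc)
  positivity
lemma SS_mono {m n : ℕ} (h : m ≤ n) : c.SS m ≤ c.SS n := by
  unfold SS
  exact mul_le_mul_of_nonneg_left
    (Finset.sum_le_sum_of_subset_of_nonneg (Finset.range_subset_range.mpr h)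
      (fun i _ _ => (dl_pos hc i).le)) (SS_coeff_nonneg hc)
lemma WW_pos : 0 < c.WW := by
  unfold WW
  apply Finset.sum_pos
  · intro k _; exact one_div_pos.mpr (AA_pos hc k)
  · exact ⟨0, Finset.mem_range.mpr (by have := hc.hN2; omega)⟩
lemma tt_mul_AA (n : ℕ) : c.tt n * c.AA n = c.CC - c.SS n :=
  div_mul_cancel₀ _ (AA_ne hc n)
lemma sum_tt : ∑ k ∈ Finset.range c.N, c.tt k = 0 := by
  have hW := ne_of_gt (WW_pos hc)
  have : ∑ k ∈ Finset.range c.N, c.tt k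
      = c.CC * c.WW - ∑ k ∈ Finset.range c.N, c.SS k / c.AA k := by
    unfold tt WW
    rw [Finset.mul_sum, ← Finset.sum_sub_distrib]
    apply Finset.sum_congr rfl
    intro k _
    show (c.CC - c.SS k) / c.AA k = _; rw [sub_div, mul_one_div]
  rw [this]
  unfold CC
  rw [div_mul_cancel₀ _ hW, sub_self]
omit hc in
lemma LL_succ (n : ℕ) : c.LL (n+1) = c.LL n + c.tt n := by
  unfold LL; rw [Finset.sum_range_succ]
lemma LL_N : c.LL c.N = 0 := sum_tt hc

-- ### Part 2: key inequality and structure of the candidate optimum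

lemma sum_h_dl_le {k n : ℕ} (h : k ≤ n) :
    c.hh * ∑ j ∈ Finset.Ico k n, c.dl j ≤ (c.dl n ^ 2 - c.dl k ^ 2) / 2 := by
  have tel : ∑ j ∈ Finset.Ico k n, (c.dl (j+1) ^ 2 - c.dl j ^ 2)
      = c.dl n ^ 2 - c.dl k ^ 2 := by
    rw [Finset.sum_Ico_eq_sub _ h, Finset.sum_range_sub (fun j => c.dl j ^ 2),
      Finset.sum_range_sub (fun j => c.dl j ^ 2)]
    ring
  have per : ∀ j ∈ Finset.Ico k n, c.hh * c.dl j ≤ (c.dl (j+1) ^ 2 - c.dl j ^ 2) / 2 := by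
    intro j _
    rw [dl_succ]
    nlinarith [sq_nonneg c.hh]
  calc c.hh * ∑ j ∈ Finset.Ico k n, c.dl j
      = ∑ j ∈ Finset.Ico k n, c.hh * c.dl j := Finset.mul_sum _ _ _
    _ ≤ ∑ j ∈ Finset.Ico k n, (c.dl (j+1) ^ 2 - c.dl j ^ 2) / 2 := Finset.sum_le_sum per
    _ = (c.dl n ^ 2 - c.dl k ^ 2) / 2 := by rw [← Finset.sum_div, tel]

lemma term_bound {n k : ℕ} (hn : n < c.N) (_hk : k < c.N) :
    2 * (c.N : ℝ) * (c.SS n - c.SS k) < c.d1 * c.AA n := by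
  have hd := hd1 hc
  have hA := AA_ge_one hc n
  have hRp := hR0 hc
  have hNneq := hNne hc
  rcases le_or_gt n k with h | h
  · have h1 : c.SS n - c.SS k ≤ 0 := by linarith [SS_mono hc h]
    have h2 : (0:ℝ) < 2 * (c.N : ℝ) := by have := hN0 hc; linarith
    nlinarith
  · -- k < n
    have hIco : c.SS n - c.SS k
        = c.d1 * c.R * c.hh / (c.N : ℝ) * ∑ j ∈ Finset.Ico k n, c.dl j := by
      unfold SS
      rw [Finset.sum_Ico_eq_sub _ h.le]
      ring
    have h2 : 2 * (c.N : ℝ) * (c.SS n - c.SS k)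
        = 2 * c.d1 * c.R * (c.hh * ∑ j ∈ Finset.Ico k n, c.dl j) := by
      rw [hIco]; field_simp
    have h3 := sum_h_dl_le hc h.le
    have h4 : 2 * c.d1 * c.R * (c.hh * ∑ j ∈ Finset.Ico k n, c.dl j)
        ≤ c.d1 * c.R * (c.dl n ^ 2 - c.dl k ^ 2) := by
      have hcoef : (0:ℝ) ≤ 2 * c.d1 * c.R := by positivity
      nlinarith [mul_le_mul_of_nonneg_left h3 hcoef]
    -- R * (dl n ^2 - dl k ^2) < AA n
    have h5 : c.R * (c.dl n ^ 2 - c.dl k ^ 2) < c.AA n := by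
      have hb : c.dl n ≤ c.b := dl_le_b hc hn
      have hc2 := hc.hc2
      have hk2 : (0:ℝ) < c.dl k ^ 2 := by have := dl_pos hc k; positivity
      have hhp := hh_pos hc
      -- AA n = 1 + R*(dl n - hh)*dl n
      have : c.R * c.hh * c.dl n ≤ 1/2 := by
        nlinarith [mul_le_mul_of_nonneg_left hb (by positivity : (0:ℝ) ≤ c.R * c.hh)]
      unfold AA
      nlinarith
    calc 2 * (c.N : ℝ) * (c.SS n - c.SS k)
        ≤ c.d1 * c.R * (c.dl n ^ 2 - c.dl k ^ 2) := by rw [h2]; exact h4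
      _ < c.d1 * c.AA n := by nlinarith

lemma key {n : ℕ} (hn : n < c.N) : 0 < c.d1 + 2 * (c.N : ℝ) * c.tt n := by
  have hW := WW_pos hc
  have CCW : c.CC * c.WW = ∑ k ∈ Finset.range c.N, c.SS k / c.AA k :=
    div_mul_cancel₀ _ (ne_of_gt hW)
  have hne : Finset.Nonempty (Finset.range c.N) :=
    ⟨0, Finset.mem_range.mpr (by have := hc.hN2; omega)⟩
  have hsum : ∑ k ∈ Finset.range c.N, 2 * (c.N : ℝ) * (c.SS n - c.SS k) * (1 / c.AA k)
      < ∑ k ∈ Finset.range c.N, c.d1 * c.AA n * (1 / c.AA k) := by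
    apply Finset.sum_lt_sum_of_nonempty hne
    intro k hk
    exact mul_lt_mul_of_pos_right (term_bound hc hn (Finset.mem_range.mp hk))
      (one_div_pos.mpr (AA_pos hc k))
  have lhs_eq : ∑ k ∈ Finset.range c.N, 2 * (c.N : ℝ) * (c.SS n - c.SS k) * (1 / c.AA k)
      = 2 * (c.N : ℝ) * c.SS n * c.WW - 2 * (c.N : ℝ) * (c.CC * c.WW) := by
    rw [CCW, Finset.mul_sum]
    unfold WW
    rw [Finset.mul_sum, ← Finset.sum_sub_distrib]
    apply Finset.sum_congr rfl
    intro k _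
    have hA := AA_ne hc k
    field_simp
  have rhs_eq : ∑ k ∈ Finset.range c.N, c.d1 * c.AA n * (1 / c.AA k)
      = c.d1 * c.AA n * c.WW := by
    unfold WW; rw [Finset.mul_sum]
  rw [lhs_eq, rhs_eq] at hsum
  have h6 : 2 * (c.N : ℝ) * (c.SS n - c.CC) < c.d1 * c.AA n := by nlinarith
  have h7 : -c.d1 < 2 * (c.N : ℝ) * c.tt n := by
    unfold tt
    rw [mul_div_assoc']
    rw [lt_div_iff₀ (AA_pos hc n)]
    nlinarith
  linarith

lemma tt_succ_lt {n : ℕ} (hn : n < c.N) : c.tt (n+1) < c.tt n := by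
  have hA := AA_pos hc n
  have hA1 := AA_pos hc (n+1)
  have hk := key hc hn
  have hdl := dl_pos hc n
  have hhp := hh_pos hc
  have hRp := hR0 hc
  have hNp := hN0 hc
  have e : (c.tt n - c.tt (n+1)) * ((c.N : ℝ) * (c.AA n * c.AA (n+1)))
      = c.R * c.hh * c.dl n * c.AA n * (c.d1 + 2 * (c.N : ℝ) * c.tt n) := by
    have h1 := tt_mul_AA hc n
    have h2 := tt_mul_AA hc (n+1)
    have h3 := AA_succ hc n
    have h4 := SS_succ (c := c) n
    have hNne := hNne hc
    have h4' : (c.N : ℝ) * c.SS (n+1) = (c.N : ℝ) * c.SS n + c.d1 * c.R * c.hh * c.dl n := by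
      rw [h4]; field_simp
    linear_combination ((c.N : ℝ) * c.AA (n+1) - 2 * (c.R * c.hh * c.dl n) * (c.N : ℝ)) * h1
      - (c.N : ℝ) * c.AA n * h2 + (c.N : ℝ) * (c.CC - c.SS n) * h3 + c.AA n * h4'
  have hpos : 0 < c.R * c.hh * c.dl n * c.AA n * (c.d1 + 2 * (c.N : ℝ) * c.tt n) := by
    positivity
  have hden : 0 < (c.N : ℝ) * (c.AA n * c.AA (n+1)) := by positivity
  by_contra hcon
  push_neg at hcon
  nlinarith [mul_nonpos_of_nonpos_of_nonneg (by linarith : c.tt n - c.tt (n+1) ≤ 0) hden.le]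

lemma tt_anti {i j : ℕ} (hij : i < j) (hj : j ≤ c.N) : c.tt j < c.tt i := by
  induction j with
  | zero => omega
  | succ k ih =>
    have hk : k < c.N := by omega
    rcases Nat.lt_succ_iff_lt_or_eq.mp hij with h' | h'
    · exact (tt_succ_lt hc hk).trans (ih h' (by omega))
    · rw [h']; exact tt_succ_lt hc hk

lemma LL_pos {n : ℕ} (h0 : 0 < n) (hn : n < c.N) : 0 < c.LL n := by
  have hsplit : c.LL n + ∑ k ∈ Finset.Ico n c.N, c.tt k = 0 := by
    unfold LL
    rw [Finset.range_eq_Ico, Finset.sum_Ico_consecutive _ (Nat.zero_le n) hn.le,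
      ← Finset.range_eq_Ico]
    exact sum_tt hc
  rcases lt_or_ge 0 (c.tt (n-1)) with hp | hp
  · unfold LL
    apply Finset.sum_pos
    · intro k hk
      have hk' : k < n := Finset.mem_range.mp hk
      rcases Nat.lt_or_ge k (n-1) with h | h
      · exact hp.trans (tt_anti hc h (by omega))
      · have : k = n - 1 := by omega
        rw [this]; exact hp
    · exact ⟨0, Finset.mem_range.mpr h0⟩
  · have hneg : ∑ k ∈ Finset.Ico n c.N, c.tt k < 0 := by
      apply Finset.sum_neg
      · intro k hk
        have hk' := Finset.mem_Ico.mp hk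
        have : c.tt k < c.tt (n-1) := tt_anti hc (by omega) (by omega)
        linarith
      · exact ⟨n, Finset.mem_Ico.mpr ⟨le_refl n, hn⟩⟩
    linarith

lemma LL_nonneg {n : ℕ} (hn : n ≤ c.N) : 0 ≤ c.LL n := by
  rcases Nat.eq_zero_or_pos n with h | h
  · simp [h, LL]
  · rcases eq_or_lt_of_le hn with h' | h'
    · rw [h', LL_N hc]
    · exact (LL_pos hc h h').le

lemma x2_pos {n : ℕ} (hn : n < c.N) : 0 < c.x2 n := by
  have hk := key hc hn
  have hd := hd1 hc
  have hR := hR0 hc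
  have hNp := hN0 hc
  have : 0 < c.d1 + (c.N : ℝ) * c.tt n := by
    rcases le_or_gt 0 (c.tt n) with h | h
    · nlinarith
    · nlinarith
  unfold x2; positivity

lemma x2_anti {i j : ℕ} (hij : i < j) (hj : j < c.N) : c.x2 j < c.x2 i := by
  have := tt_anti hc hij hj.le
  have hR := hR0 hc
  have hNp := hN0 hc
  unfold x2
  nlinarith [mul_pos hR (mul_pos hNp (sub_pos.mpr this))]

lemma x3_pos {n : ℕ} (hn : n < c.N) : 0 < c.x3 n := by
  have hk := key hc hn
  have hd := hd1 hc
  have hR := hR0 hc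
  have hNp := hN0 hc
  have hdl := dl_pos hc n
  have hhp := hh_pos hc
  have hL := LL_nonneg hc hn.le
  have h1 : 0 < c.d1 + (c.N : ℝ) * c.tt n := by
    rcases le_or_gt 0 (c.tt n) with h | h
    · nlinarith
    · nlinarith
  have : c.d1 * c.dl n + (c.N : ℝ) * (c.dl n * c.tt n + c.hh * c.LL n)
      = c.dl n * (c.d1 + (c.N : ℝ) * c.tt n) + (c.N : ℝ) * c.hh * c.LL n := by ring
  unfold x3
  rw [this]
  have h2 : 0 < c.dl n * (c.d1 + (c.N : ℝ) * c.tt n) := by positivity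
  have h3 : 0 ≤ (c.N : ℝ) * c.hh * c.LL n := by positivity
  positivity

/-- the adjacent incentive constraints hold with equality at the candidate -/
lemma IC_adj (n : ℕ) : c.x2 (n+1) + c.dl n * c.x3 (n+1) = c.x2 n + c.dl n * c.x3 n := by
  have h1 := tt_mul_AA hc n
  have h2 := tt_mul_AA hc (n+1)
  have h3 := AA_succ hc n
  have h4 := SS_succ (c := c) n
  have h5 := LL_succ (c := c) n
  have h6 := dl_succ (c := c) n
  have hNne := hNne hc
  unfold x2 x3
  rw [h5, h6]
  -- use AA n = 1 + R*(dl n - hh)*dl n  and  AA(n+1) = 1 + R*dl n*(dl n + hh)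
  have e1 : c.R * (c.dl n - c.hh) * c.dl n = c.AA n - 1 := by unfold AA; ring
  have e2 : c.R * c.dl n * (c.dl n + c.hh) = c.AA (n+1) - 1 := by
    rw [h3]; unfold AA; ring
  have goal' : (c.N : ℝ) * (c.tt n * c.AA n) - (c.N : ℝ) * (c.tt (n+1) * c.AA (n+1))
      = c.d1 * c.R * c.hh * c.dl n := by
    rw [h1, h2, h4]
    field_simp
    ring
  linear_combination (-c.R) * goal' + (-(c.R * (c.N : ℝ) * c.tt n)) * e1
    + (c.R * (c.N : ℝ) * c.tt (n+1)) * e2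

lemma x3_succ_gt {n : ℕ} (hn : n + 1 < c.N) : c.x3 n < c.x3 (n+1) := by
  have h1 := IC_adj hc n
  have h2 := x2_anti hc (Nat.lt_succ_self n) hn
  have h3 := dl_pos hc n
  nlinarith

lemma x3_mono {i j : ℕ} (hij : i < j) (hj : j < c.N) : c.x3 i < c.x3 j := by
  induction j with
  | zero => omega
  | succ k ih =>
    rcases Nat.lt_succ_iff_lt_or_eq.mp hij with h' | h'
    · exact (ih h' (by omega)).trans (x3_succ_gt hc hj)
    · rw [h']; exact x3_succ_gt hc hj

/-- telescoping: difference of type-e valuations -/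
lemma telesc (e : ℝ) {i j : ℕ} (hij : i ≤ j) :
    (c.x2 j + e * c.x3 j) - (c.x2 i + e * c.x3 i)
      = ∑ n ∈ Finset.Ico i j, (e - c.dl n) * (c.x3 (n+1) - c.x3 n) := by
  have per : ∀ n ∈ Finset.Ico i j, (e - c.dl n) * (c.x3 (n+1) - c.x3 n)
      = (c.x2 (n+1) + e * c.x3 (n+1)) - (c.x2 n + e * c.x3 n) := by
    intro n _
    linear_combination (-1 : ℝ) * IC_adj hc n
  rw [Finset.sum_congr rfl per]
  rw [Finset.sum_Ico_eq_sub _ hij,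
    Finset.sum_range_sub (fun n => c.x2 n + e * c.x3 n),
    Finset.sum_range_sub (fun n => c.x2 n + e * c.x3 n)]
  ring

/-- All incentive constraints hold at the candidate. -/
lemma IC_all {i j : ℕ} (hi : i < c.N) (hj : j < c.N) :
    c.x2 j + c.dl i * c.x3 j ≤ c.x2 i + c.dl i * c.x3 i := by
  rcases le_or_gt i j with h | h
  · have := telesc hc (c.dl i) h
    have hsum : ∑ n ∈ Finset.Ico i j, (c.dl i - c.dl n) * (c.x3 (n+1) - c.x3 n) ≤ 0 := by
      apply Finset.sum_nonpos
      intro n hn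
      have hn' := Finset.mem_Ico.mp hn
      have h1 : c.dl i - c.dl n ≤ 0 := by linarith [dl_mono hc hn'.1]
      have h2 : 0 ≤ c.x3 (n+1) - c.x3 n := by
        have : n + 1 < c.N := by omega
        linarith [x3_succ_gt hc this]
      nlinarith
    linarith
  · have := telesc hc (c.dl i) h.le
    have hsum : 0 ≤ ∑ n ∈ Finset.Ico j i, (c.dl i - c.dl n) * (c.x3 (n+1) - c.x3 n) := by
      apply Finset.sum_nonneg
      intro n hn
      have hn' := Finset.mem_Ico.mp hn
      have h1 : 0 ≤ c.dl i - c.dl n := by linarith [dl_mono hc (by omega : n ≤ i)]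
      have h2 : 0 ≤ c.x3 (n+1) - c.x3 n := by
        have : n + 1 < c.N := by omega
        linarith [x3_succ_gt hc this]
      positivity
    linarith

-- ### Part 3: the Lagrangian certificate

omit hc in
lemma LL_zero : c.LL 0 = 0 := by simp [LL]

lemma Bq_pos : 0 < c.Bq := by
  have hR := hR0 hc
  have hN := hN0 hc
  have : 0 ≤ ∑ n ∈ Finset.range c.N, (1 / (c.N : ℝ)) * ((c.x2 n) ^ 2 / c.R + (c.x3 n) ^ 2 / c.R ^ 2) := by
    apply Finset.sum_nonneg
    intro n _
    positivity
  unfold Bq; linarith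

lemma sg_pos : 0 < c.sg := Real.sqrt_pos.mpr (div_pos (Bq_pos hc) hc.hI)

lemma sg_sq : c.sg ^ 2 = c.Bq / c.Inc := Real.sq_sqrt (le_of_lt (div_pos (Bq_pos hc) hc.hI))

/-- objective, ℕ-indexed -/
noncomputable def objN (u1 : ℝ) (u2 u3 : ℕ → ℝ) : ℝ :=
  u1 + c.d1 * ∑ n ∈ Finset.range c.N, (1 / (c.N : ℝ)) * (u2 n + c.dl n * u3 n)

/-- budget, ℕ-indexed -/
noncomputable def BN (u1 : ℝ) (u2 u3 : ℕ → ℝ) : ℝ :=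
  u1 ^ 2 + ∑ n ∈ Finset.range c.N, (1 / (c.N : ℝ)) * ((u2 n) ^ 2 / c.R + (u3 n) ^ 2 / c.R ^ 2)

/-- weighted sum of adjacent IC slacks -/
noncomputable def ICSN (u2 u3 : ℕ → ℝ) : ℝ :=
  ∑ n ∈ Finset.range (c.N - 1),
    c.LL (n+1) * ((u2 n + c.dl n * u3 n) - (u2 (n+1) + c.dl n * u3 (n+1)))

omit hc in
lemma abel (u2 u3 : ℕ → ℝ) (K : ℕ) :
    ∑ n ∈ Finset.range K,
      c.LL (n+1) * ((u2 n + c.dl n * u3 n) - (u2 (n+1) + c.dl n * u3 (n+1)))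
    = (∑ m ∈ Finset.range (K+1),
        (c.tt m * u2 m + (c.dl m * c.tt m + c.hh * c.LL m) * u3 m))
      - c.LL (K+1) * (u2 K + c.dl K * u3 K) := by
  induction K with
  | zero =>
    rw [Finset.sum_range_zero, zero_add, Finset.sum_range_one, LL_succ, LL_zero]
    ring
  | succ K ih =>
    rw [Finset.sum_range_succ, ih]
    rw [Finset.sum_range_succ
      (f := fun m => (c.tt m * u2 m + (c.dl m * c.tt m + c.hh * c.LL m) * u3 m)) (n := K+1)]
    rw [LL_succ (c := c) (K+1), dl_succ (c := c) K]
    ring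

lemma ICSN_eq (u2 u3 : ℕ → ℝ) :
    c.ICSN u2 u3 = ∑ m ∈ Finset.range c.N,
      (c.tt m * u2 m + (c.dl m * c.tt m + c.hh * c.LL m) * u3 m) := by
  have hN : c.N - 1 + 1 = c.N := by have := hc.hN2; omega
  unfold ICSN
  rw [abel, hN, LL_N hc]
  ring

lemma ICSN_nonneg (u2 u3 : ℕ → ℝ)
    (hIC : ∀ i j : ℕ, i < c.N → j < c.N →
      u2 j + c.dl i * u3 j ≤ u2 i + c.dl i * u3 i) :
    0 ≤ c.ICSN u2 u3 := by
  apply Finset.sum_nonneg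
  intro n hn
  have hn' := Finset.mem_range.mp hn
  have h1 : 0 ≤ c.LL (n+1) := LL_nonneg hc (by omega)
  have h2 : 0 ≤ (u2 n + c.dl n * u3 n) - (u2 (n+1) + c.dl n * u3 (n+1)) := by
    have := hIC n (n+1) (by omega) (by omega)
    linarith
  positivity

lemma ICSN_vs : c.ICSN (fun n => c.x2 n / c.sg) (fun n => c.x3 n / c.sg) = 0 := by
  apply Finset.sum_eq_zero
  intro n _
  have h := IC_adj hc n
  have : c.x2 n / c.sg + c.dl n * (c.x3 n / c.sg)
      - (c.x2 (n+1) / c.sg + c.dl n * (c.x3 (n+1) / c.sg))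
      = ((c.x2 n + c.dl n * c.x3 n) - (c.x2 (n+1) + c.dl n * c.x3 (n+1))) / c.sg := by
    field_simp
  simp only [this, h]
  simp

lemma BN_vs : c.BN (1 / c.sg) (fun n => c.x2 n / c.sg) (fun n => c.x3 n / c.sg) = c.Inc := by
  have hsg := sg_pos hc
  have hB := Bq_pos hc
  have hI := hc.hI
  have e : ∀ n ∈ Finset.range c.N,
      (1 / (c.N : ℝ)) * ((c.x2 n / c.sg) ^ 2 / c.R + (c.x3 n / c.sg) ^ 2 / c.R ^ 2)
      = (1 / c.sg ^ 2) * ((1 / (c.N : ℝ)) * ((c.x2 n) ^ 2 / c.R + (c.x3 n) ^ 2 / c.R ^ 2)) := by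
    intro n _
    have h1 := hRne hc
    have h2 := ne_of_gt hsg
    have h3 := hNne hc
    field_simp
  unfold BN
  rw [Finset.sum_congr rfl e, ← Finset.mul_sum]
  have hBq : (1:ℝ) + ∑ n ∈ Finset.range c.N,
      (1 / (c.N : ℝ)) * ((c.x2 n) ^ 2 / c.R + (c.x3 n) ^ 2 / c.R ^ 2) = c.Bq := rfl
  have hsq := sg_sq hc
  have hsgne := ne_of_gt hsg
  have hSig : ∑ n ∈ Finset.range c.N,
      (1 / (c.N : ℝ)) * ((c.x2 n) ^ 2 / c.R + (c.x3 n) ^ 2 / c.R ^ 2) = c.Bq - 1 := by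
    rw [← hBq]; ring
  rw [hSig]
  rw [show (1 / c.sg) ^ 2 + 1 / c.sg ^ 2 * (c.Bq - 1) = c.Bq / c.sg ^ 2 by field_simp; ring]
  rw [hsq]
  field_simp

/-- expansion of the Lagrangian into scalar + one big sum -/
lemma expandL (w1 : ℝ) (w2 w3 : ℕ → ℝ) :
    c.objN w1 w2 w3 + (c.sg / 2) * (c.Inc - c.BN w1 w2 w3) + c.ICSN w2 w3
    = (w1 - (c.sg / 2) * w1 ^ 2 + (c.sg / 2) * c.Inc)
      + ∑ m ∈ Finset.range c.N,
        (c.d1 * ((1 / (c.N : ℝ)) * (w2 m + c.dl m * w3 m))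
          - (c.sg / 2) * ((1 / (c.N : ℝ)) * ((w2 m) ^ 2 / c.R + (w3 m) ^ 2 / c.R ^ 2))
          + (c.tt m * w2 m + (c.dl m * c.tt m + c.hh * c.LL m) * w3 m)) := by
  have split : ∑ m ∈ Finset.range c.N,
      (c.d1 * ((1 / (c.N : ℝ)) * (w2 m + c.dl m * w3 m))
        - (c.sg / 2) * ((1 / (c.N : ℝ)) * ((w2 m) ^ 2 / c.R + (w3 m) ^ 2 / c.R ^ 2))
        + (c.tt m * w2 m + (c.dl m * c.tt m + c.hh * c.LL m) * w3 m))
      = c.d1 * (∑ m ∈ Finset.range c.N, (1 / (c.N : ℝ)) * (w2 m + c.dl m * w3 m))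
        - (c.sg / 2) * (∑ m ∈ Finset.range c.N,
            (1 / (c.N : ℝ)) * ((w2 m) ^ 2 / c.R + (w3 m) ^ 2 / c.R ^ 2))
        + ∑ m ∈ Finset.range c.N,
            (c.tt m * w2 m + (c.dl m * c.tt m + c.hh * c.LL m) * w3 m) := by
    rw [Finset.sum_add_distrib, Finset.sum_sub_distrib, ← Finset.mul_sum, ← Finset.mul_sum,
      Finset.mul_sum (Finset.range c.N)
        (fun m => (1 / (c.N : ℝ)) * ((w2 m) ^ 2 / c.R + (w3 m) ^ 2 / c.R ^ 2)) (c.sg / 2)]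
  rw [ICSN_eq hc]
  unfold objN BN
  rw [split]
  ring

/-- the master identity: Lagrangian value at `u` equals Lagrangian value at the
candidate minus a weighted square distance. -/
lemma master (u1 : ℝ) (u2 u3 : ℕ → ℝ) :
    c.objN u1 u2 u3 + (c.sg / 2) * (c.Inc - c.BN u1 u2 u3) + c.ICSN u2 u3
    = c.objN (1 / c.sg) (fun n => c.x2 n / c.sg) (fun n => c.x3 n / c.sg)
      + (c.sg / 2) * (c.Inc - c.BN (1 / c.sg) (fun n => c.x2 n / c.sg) (fun n => c.x3 n / c.sg))
      + c.ICSN (fun n => c.x2 n / c.sg) (fun n => c.x3 n / c.sg)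
      - (c.sg / 2) * ((u1 - 1 / c.sg) ^ 2
        + ∑ n ∈ Finset.range c.N, (1 / (c.N : ℝ)) *
            ((u2 n - c.x2 n / c.sg) ^ 2 / c.R + (u3 n - c.x3 n / c.sg) ^ 2 / c.R ^ 2)) := by
  have hsg := ne_of_gt (sg_pos hc)
  have hRn := hRne hc
  have hNn := hNne hc
  rw [expandL hc, expandL hc]
  have per : ∀ m ∈ Finset.range c.N,
      (c.d1 * ((1 / (c.N : ℝ)) * (u2 m + c.dl m * u3 m))
        - (c.sg / 2) * ((1 / (c.N : ℝ)) * ((u2 m) ^ 2 / c.R + (u3 m) ^ 2 / c.R ^ 2))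
        + (c.tt m * u2 m + (c.dl m * c.tt m + c.hh * c.LL m) * u3 m))
      = (c.d1 * ((1 / (c.N : ℝ)) * (c.x2 m / c.sg + c.dl m * (c.x3 m / c.sg)))
          - (c.sg / 2) * ((1 / (c.N : ℝ)) * ((c.x2 m / c.sg) ^ 2 / c.R + (c.x3 m / c.sg) ^ 2 / c.R ^ 2))
          + (c.tt m * (c.x2 m / c.sg) + (c.dl m * c.tt m + c.hh * c.LL m) * (c.x3 m / c.sg)))
        - (c.sg / 2) * ((1 / (c.N : ℝ)) *
            ((u2 m - c.x2 m / c.sg) ^ 2 / c.R + (u3 m - c.x3 m / c.sg) ^ 2 / c.R ^ 2)) := by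
    intro m _
    unfold x2 x3
    field_simp
    ring
  rw [Finset.sum_congr rfl per, Finset.sum_sub_distrib]
  have hscal : u1 - (c.sg / 2) * u1 ^ 2
      = (1 / c.sg - (c.sg / 2) * (1 / c.sg) ^ 2) - (c.sg / 2) * (u1 - 1 / c.sg) ^ 2 := by
    field_simp
    ring
  have hq : ∑ x ∈ Finset.range c.N, (c.sg / 2) * ((1 / (c.N : ℝ)) *
        ((u2 x - c.x2 x / c.sg) ^ 2 / c.R + (u3 x - c.x3 x / c.sg) ^ 2 / c.R ^ 2))
      = (c.sg / 2) * ∑ x ∈ Finset.range c.N, ((1 / (c.N : ℝ)) *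
        ((u2 x - c.x2 x / c.sg) ^ 2 / c.R + (u3 x - c.x3 x / c.sg) ^ 2 / c.R ^ 2)) :=
    (Finset.mul_sum _ _ _).symm
  rw [hq]
  linarith [hscal]

end Ctx
end Stmt15Aux

-- (appended after namespace Stmt15Aux content; assumes deltaUnif/Feas15/obj15 are defined ABOVE)

set_option maxHeartbeats 3000000 in
/-- Example (square-root utility, full separation for many types).
For all sufficiently many equally spaced types with uniform common beliefs, and any
initial type, the (unique) maximizer of Problem IV (`T = 3`) has date-2 utilities
strictly positive and strictly decreasing in the type, and date-3 utilities strictly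
positive and strictly increasing in the type. -/
theorem stmt15
    (R I : ℝ) (hR : 1 ≤ R) (hI : 0 < I)
    (δlo δhi : ℝ) (hlo : 0 < δlo) (hlh : δlo < δhi) :
    ∃ N0 : ℕ, ∀ N : ℕ, N0 ≤ N → 2 ≤ N → ∀ n1 : Fin N,
      ∀ (v1 : ℝ) (v2 v3 : Fin N → ℝ),
        (Feas15 N δlo δhi R I v1 v2 v3 ∧
          ∀ (u1 : ℝ) (u2 u3 : Fin N → ℝ), Feas15 N δlo δhi R I u1 u2 u3 →
            obj15 N δlo δhi n1 u1 u2 u3 ≤ obj15 N δlo δhi n1 v1 v2 v3) →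
        (∀ n, 0 < v2 n) ∧ (∀ i j : Fin N, i < j → v2 j < v2 i) ∧
        (∀ n, 0 < v3 n) ∧ (∀ i j : Fin N, i < j → v3 i < v3 j) := by
  classical
  obtain ⟨M, hM⟩ := exists_nat_gt ((δhi - δlo) / δlo + 2 * R * δhi * (δhi - δlo) + 1)
  refine ⟨M, ?_⟩
  intro N hMN hN2 n1 v1 v2 v3 ⟨hfeas, hopt⟩
  have hR0 : (0:ℝ) < R := lt_of_lt_of_le one_pos hR
  have hN1 : (1:ℝ) ≤ (N:ℝ) - 1 := by
    have : (2:ℝ) ≤ (N:ℝ) := by exact_mod_cast hN2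
    linarith
  have hN1' : (0:ℝ) < (N:ℝ) - 1 := by linarith
  have hMN' : (M:ℝ) ≤ (N:ℝ) := by exact_mod_cast hMN
  have hba : 0 < δhi - δlo := by linarith
  have htail : (δhi - δlo) / δlo + 2 * R * δhi * (δhi - δlo) ≤ (N:ℝ) - 1 := by linarith
  have ht1 : (0:ℝ) ≤ (δhi - δlo) / δlo := by positivity
  have ht2 : (0:ℝ) ≤ 2 * R * δhi * (δhi - δlo) := by
    have : (0:ℝ) < δhi := lt_trans hlo hlh
    positivity
  set c : Stmt15Aux.Ctx := ⟨R, I, δlo, δhi, deltaUnif δlo δhi N n1, N⟩ with hcdef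
  have hch : c.hh = (δhi - δlo) / ((N:ℝ) - 1) := rfl
  have hdlN : ∀ m : ℕ, c.dl m = δlo + (m:ℝ) * ((δhi - δlo) / ((N:ℝ) - 1)) := fun m => rfl
  have hdelta : ∀ i : Fin N, deltaUnif δlo δhi N i = c.dl (i : ℕ) := by
    intro i
    rw [hdlN, deltaUnif]
    ring
  have hd1dl : c.d1 = c.dl (n1 : ℕ) := hdelta n1
  have hGood : c.Good := by
    refine ⟨hR, hI, hlo, hlh, ?_, ?_, hN2, ?_, ?_⟩
    · -- δlo ≤ d1
      rw [hd1dl, hdlN]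
      have h1 : (0:ℝ) ≤ ((n1 : ℕ) : ℝ) := Nat.cast_nonneg _
      have h2 : (0:ℝ) ≤ (δhi - δlo) / ((N:ℝ) - 1) := by positivity
      nlinarith
    · -- d1 ≤ δhi
      rw [hd1dl, hdlN]
      have h1 : ((n1 : ℕ) : ℝ) ≤ (N:ℝ) - 1 := by
        have := n1.isLt
        have : ((n1 : ℕ) : ℝ) + 1 ≤ (N:ℝ) := by exact_mod_cast this
        linarith
      have h2 : (0:ℝ) < (δhi - δlo) / ((N:ℝ) - 1) := by positivity
      have h3 : ((n1:ℕ):ℝ) * ((δhi - δlo) / ((N:ℝ) - 1))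
          ≤ ((N:ℝ) - 1) * ((δhi - δlo) / ((N:ℝ) - 1)) := by nlinarith [Nat.cast_nonneg (α := ℝ) (n1 : ℕ)]
      have h4 : ((N:ℝ) - 1) * ((δhi - δlo) / ((N:ℝ) - 1)) = δhi - δlo := by
        field_simp
      linarith
    · -- hh ≤ δlo
      rw [hch, div_le_iff₀ hN1']
      have : (δhi - δlo) / δlo ≤ (N:ℝ) - 1 := by linarith
      have := (div_le_iff₀ hlo).mp this
      linarith
    · -- 2 R δhi hh ≤ 1
      rw [hch]
      show 2 * R * δhi * ((δhi - δlo) / ((N:ℝ) - 1)) ≤ 1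
      rw [show 2 * R * δhi * ((δhi - δlo) / ((N:ℝ) - 1))
          = (2 * R * δhi * (δhi - δlo)) / ((N:ℝ) - 1) from by ring,
        div_le_one hN1']
      linarith
  -- lifted functions
  set V2 : ℕ → ℝ := fun m => if h : m < N then v2 ⟨m, h⟩ else 0 with hV2def
  set V3 : ℕ → ℝ := fun m => if h : m < N then v3 ⟨m, h⟩ else 0 with hV3def
  have hV2 : ∀ i : Fin N, V2 (i : ℕ) = v2 i := by
    intro i; simp [hV2def, i.isLt]
  have hV3 : ∀ i : Fin N, V3 (i : ℕ) = v3 i := by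
    intro i; simp [hV3def, i.isLt]
  have hcN : c.N = N := rfl
  -- conversion of objective
  have hconvObj : ∀ (u1 : ℝ) (u2 u3 : Fin N → ℝ) (U2 U3 : ℕ → ℝ),
      (∀ i : Fin N, U2 (i:ℕ) = u2 i) → (∀ i : Fin N, U3 (i:ℕ) = u3 i) →
      obj15 N δlo δhi n1 u1 u2 u3 = c.objN u1 U2 U3 := by
    intro u1 u2 u3 U2 U3 h2 h3
    rw [obj15, Stmt15Aux.Ctx.objN,
      ← Fin.sum_univ_eq_sum_range (fun m => (1 / (N : ℝ)) * (U2 m + c.dl m * U3 m)) N]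
    have hper : ∀ i ∈ Finset.univ (α := Fin N),
        (1 / (N:ℝ)) * (u2 i + deltaUnif δlo δhi N i * u3 i)
          = (1 / (N:ℝ)) * (U2 (i:ℕ) + c.dl (i:ℕ) * U3 (i:ℕ)) := by
      intro i _
      rw [h2 i, h3 i, hdelta i]
    rw [Finset.sum_congr rfl hper]
  -- conversion of budget
  have hconvB : ∀ (u1 : ℝ) (u2 u3 : Fin N → ℝ) (U2 U3 : ℕ → ℝ),
      (∀ i : Fin N, U2 (i:ℕ) = u2 i) → (∀ i : Fin N, U3 (i:ℕ) = u3 i) →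
      u1 ^ 2 + (∑ n : Fin N, (1 / (N : ℝ)) * ((u2 n) ^ 2 / R + (u3 n) ^ 2 / R ^ 2))
        = c.BN u1 U2 U3 := by
    intro u1 u2 u3 U2 U3 h2 h3
    rw [Stmt15Aux.Ctx.BN,
      ← Fin.sum_univ_eq_sum_range
        (fun m => (1 / (N : ℝ)) * ((U2 m) ^ 2 / R + (U3 m) ^ 2 / R ^ 2)) N]
    have hper : ∀ i ∈ Finset.univ (α := Fin N),
        (1 / (N:ℝ)) * ((u2 i) ^ 2 / R + (u3 i) ^ 2 / R ^ 2)
          = (1 / (N:ℝ)) * ((U2 (i:ℕ)) ^ 2 / R + (U3 (i:ℕ)) ^ 2 / R ^ 2) := by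
      intro i _
      rw [h2 i, h3 i]
    rw [Finset.sum_congr rfl hper]
  -- the candidate optimum as Fin N functions
  have hsg := Stmt15Aux.Ctx.sg_pos hGood
  have hsgne : c.sg ≠ 0 := ne_of_gt hsg
  set w1 : ℝ := 1 / c.sg with hw1
  set w2 : Fin N → ℝ := fun i => c.x2 (i : ℕ) / c.sg with hw2
  set w3 : Fin N → ℝ := fun i => c.x3 (i : ℕ) / c.sg with hw3
  set W2 : ℕ → ℝ := fun m => c.x2 m / c.sg with hW2
  set W3 : ℕ → ℝ := fun m => c.x3 m / c.sg with hW3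
  have hW2w : ∀ i : Fin N, W2 (i:ℕ) = w2 i := fun i => rfl
  have hW3w : ∀ i : Fin N, W3 (i:ℕ) = w3 i := fun i => rfl
  have hfeasW : Feas15 N δlo δhi R I w1 w2 w3 := by
    refine ⟨by positivity, ?_, ?_, ?_, ?_⟩
    · intro n
      exact le_of_lt (div_pos (Stmt15Aux.Ctx.x2_pos hGood n.isLt) hsg)
    · intro n
      exact le_of_lt (div_pos (Stmt15Aux.Ctx.x3_pos hGood n.isLt) hsg)
    · rw [hconvB w1 w2 w3 W2 W3 hW2w hW3w]
      exact le_of_eq (Stmt15Aux.Ctx.BN_vs hGood)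
    · intro i j
      have h := Stmt15Aux.Ctx.IC_all hGood i.isLt j.isLt
      rw [hdelta i]
      have e1 : w2 j + c.dl (i:ℕ) * w3 j
          = (c.x2 (j:ℕ) + c.dl (i:ℕ) * c.x3 (j:ℕ)) / c.sg := by
        rw [hw2, hw3]; field_simp
      have e2 : w2 i + c.dl (i:ℕ) * w3 i
          = (c.x2 (i:ℕ) + c.dl (i:ℕ) * c.x3 (i:ℕ)) / c.sg := by
        rw [hw2, hw3]; field_simp
      rw [e1, e2]
      gcongr
  -- optimality comparison
  have hcomp := hopt w1 w2 w3 hfeasW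
  -- master inequality applied to v
  have hmaster := Stmt15Aux.Ctx.master hGood v1 V2 V3
  have hobj_v : obj15 N δlo δhi n1 v1 v2 v3 = c.objN v1 V2 V3 :=
    hconvObj v1 v2 v3 V2 V3 hV2 hV3
  have hobj_w : obj15 N δlo δhi n1 w1 w2 w3 = c.objN w1 W2 W3 :=
    hconvObj w1 w2 w3 W2 W3 hW2w hW3w
  obtain ⟨hv1n, hv2n, hv3n, hbud, hIC⟩ := hfeas
  have hslack : 0 ≤ c.Inc - c.BN v1 V2 V3 := by
    have := hconvB v1 v2 v3 V2 V3 hV2 hV3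
    rw [← this]
    have : c.Inc = I := rfl
    rw [this]
    linarith [hbud]
  have hICS : 0 ≤ c.ICSN V2 V3 := by
    apply Stmt15Aux.Ctx.ICSN_nonneg hGood
    intro i j hi hj
    have h := hIC ⟨i, hi⟩ ⟨j, hj⟩
    rw [hdelta ⟨i, hi⟩] at h
    have e1 := hV2 ⟨i, hi⟩
    have e2 := hV2 ⟨j, hj⟩
    have e3 := hV3 ⟨i, hi⟩
    have e4 := hV3 ⟨j, hj⟩
    simp only [Fin.val_mk] at e1 e2 e3 e4 h ⊢
    rw [e1, e2, e3, e4]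
    exact h
  -- QQ ≤ 0
  set QQ : ℝ := (v1 - 1 / c.sg) ^ 2
      + ∑ n ∈ Finset.range c.N, (1 / (c.N : ℝ)) *
          ((V2 n - c.x2 n / c.sg) ^ 2 / c.R + (V3 n - c.x3 n / c.sg) ^ 2 / c.R ^ 2) with hQQ
  clear_value QQ
  have hBNw : c.BN w1 W2 W3 = c.Inc := Stmt15Aux.Ctx.BN_vs hGood
  have hICSw : c.ICSN W2 W3 = 0 := Stmt15Aux.Ctx.ICSN_vs hGood
  have hchain : c.objN v1 V2 V3 ≤ c.objN w1 W2 W3 - (c.sg / 2) * QQ := by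
    have h1 : c.objN v1 V2 V3
        ≤ c.objN v1 V2 V3 + (c.sg / 2) * (c.Inc - c.BN v1 V2 V3) + c.ICSN V2 V3 := by
      have h0 : 0 ≤ (c.sg / 2) * (c.Inc - c.BN v1 V2 V3) :=
        mul_nonneg (by positivity) hslack
      linarith [hICS]
    rw [hmaster] at h1
    rw [hBNw, hICSw] at h1
    simp only [sub_self, mul_zero, add_zero] at h1
    exact h1
  have hQQle : (c.sg / 2) * QQ ≤ 0 := by
    rw [hobj_v, hobj_w] at hcomp
    linarith [hchain, hcomp]
  have hQQnonneg : 0 ≤ QQ := by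
    rw [hQQ]
    have : 0 ≤ ∑ n ∈ Finset.range c.N, (1 / (c.N : ℝ)) *
        ((V2 n - c.x2 n / c.sg) ^ 2 / c.R + (V3 n - c.x3 n / c.sg) ^ 2 / c.R ^ 2) := by
      apply Finset.sum_nonneg
      intro n _
      have hNp := Stmt15Aux.Ctx.hN0 hGood
      positivity
    positivity
  have hQQ0 : QQ = 0 := by
    have h1 : (c.sg / 2) * QQ ≤ (c.sg / 2) * 0 := by simpa using hQQle
    have h2 : QQ ≤ 0 := le_of_mul_le_mul_left h1 (by positivity)
    linarith [hQQnonneg]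
  -- extract coordinatewise equality
  have hsum0 : ∑ n ∈ Finset.range c.N, (1 / (c.N : ℝ)) *
      ((V2 n - c.x2 n / c.sg) ^ 2 / c.R + (V3 n - c.x3 n / c.sg) ^ 2 / c.R ^ 2) = 0 := by
    have h1 : (0:ℝ) ≤ (v1 - 1 / c.sg) ^ 2 := sq_nonneg _
    have h2 : 0 ≤ ∑ n ∈ Finset.range c.N, (1 / (c.N : ℝ)) *
        ((V2 n - c.x2 n / c.sg) ^ 2 / c.R + (V3 n - c.x3 n / c.sg) ^ 2 / c.R ^ 2) := by
      apply Finset.sum_nonneg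
      intro n _
      have hNp := Stmt15Aux.Ctx.hN0 hGood
      positivity
    rw [hQQ] at hQQ0
    linarith
  have hper : ∀ m ∈ Finset.range c.N, (1 / (c.N : ℝ)) *
      ((V2 m - c.x2 m / c.sg) ^ 2 / c.R + (V3 m - c.x3 m / c.sg) ^ 2 / c.R ^ 2) = 0 := by
    apply (Finset.sum_eq_zero_iff_of_nonneg ?_).mp hsum0
    intro n _
    have hNp := Stmt15Aux.Ctx.hN0 hGood
    positivity
  have heq : ∀ m : ℕ, m < N → V2 m = c.x2 m / c.sg ∧ V3 m = c.x3 m / c.sg := by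
    intro m hm
    have h := hper m (Finset.mem_range.mpr hm)
    have hNp := Stmt15Aux.Ctx.hN0 hGood
    have hNinv : (0:ℝ) < 1 / (c.N : ℝ) := by positivity
    have h2 : (V2 m - c.x2 m / c.sg) ^ 2 / c.R + (V3 m - c.x3 m / c.sg) ^ 2 / c.R ^ 2 = 0 := by
      rcases mul_eq_zero.mp h with h' | h'
      · exact absurd h' (ne_of_gt hNinv)
      · exact h'
    have ha : (0:ℝ) ≤ (V2 m - c.x2 m / c.sg) ^ 2 / c.R := by positivity
    have hb : (0:ℝ) ≤ (V3 m - c.x3 m / c.sg) ^ 2 / c.R ^ 2 := by positivity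
    have ha0 : (V2 m - c.x2 m / c.sg) ^ 2 / c.R = 0 := by linarith
    have hb0 : (V3 m - c.x3 m / c.sg) ^ 2 / c.R ^ 2 = 0 := by linarith
    have hRn : c.R ≠ 0 := Stmt15Aux.Ctx.hRne hGood
    constructor
    · have := (div_eq_zero_iff.mp ha0).resolve_right hRn
      have := (pow_eq_zero_iff two_ne_zero).mp this
      linarith [sub_eq_zero.mp this]
    · have := (div_eq_zero_iff.mp hb0).resolve_right (pow_ne_zero 2 hRn)
      have := (pow_eq_zero_iff two_ne_zero).mp this
      linarith [sub_eq_zero.mp this]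
  have hv2eq : ∀ i : Fin N, v2 i = c.x2 (i:ℕ) / c.sg := by
    intro i
    rw [← hV2 i]
    exact (heq (i:ℕ) i.isLt).1
  have hv3eq : ∀ i : Fin N, v3 i = c.x3 (i:ℕ) / c.sg := by
    intro i
    rw [← hV3 i]
    exact (heq (i:ℕ) i.isLt).2
  refine ⟨?_, ?_, ?_, ?_⟩
  · intro n
    rw [hv2eq n]
    exact div_pos (Stmt15Aux.Ctx.x2_pos hGood n.isLt) hsg
  · intro i j hij
    rw [hv2eq i, hv2eq j]
    have := Stmt15Aux.Ctx.x2_anti hGood (show (i:ℕ) < (j:ℕ) from hij) j.isLt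
    gcongr
  · intro n
    rw [hv3eq n]
    exact div_pos (Stmt15Aux.Ctx.x3_pos hGood n.isLt) hsg
  · intro i j hij
    rw [hv3eq i, hv3eq j]
    have := Stmt15Aux.Ctx.x3_mono hGood (show (i:ℕ) < (j:ℕ) from hij) j.isLt
    gcongr
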